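/- Let d | n, let Σ_d be embedded diagonally in Σ_n (acting on n = d·(n/d) elements arranged in n/d blocks of size d), and let G ⊆ Σ_d be a subgroup. If σ ∈ Σ_n conjugates G into a subgroup of Σ_d, then there exists η ∈ Σ_d such that conjugation by η agrees with conjugation by σ as automorphisms of G. -/

import Mathlib

set_option linter.unusedSectionVars false
set_option maxHeartbeats 1000000

open scoped Classical
open Finset

namespace Stmt9Aux

variable {G : Type*} [Group G] [Fintype G] {X Y : Type*} [Fintype X] [Fintype Y]

/-- Stabilizer of a point under a permutation representation. -/
def stabS (a : G →* Equiv.Perm X) (x : X) : Subgroup G where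
  carrier := {g | a g x = x}
  one_mem' := by simp
  mul_mem' := by
    intro g h hg hh
    simp only [Set.mem_setOf_eq, map_mul, Equiv.Perm.mul_apply] at *
    rw [hh, hg]
  inv_mem' := by
    intro g hg
    simp only [Set.mem_setOf_eq] at *
    conv_lhs => rw [← hg]
    rw [← Equiv.Perm.mul_apply, ← map_mul, inv_mul_cancel, map_one, Equiv.Perm.one_apply]

lemma mem_stabS {a : G →* Equiv.Perm X} {x : X} {g : G} : g ∈ stabS a x ↔ a g x = x := Iff.rfl

/-- Points of `A` fixed by every element of `H` (acting through `a`). -/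
noncomputable def fixIn (a : G →* Equiv.Perm X) (H : Subgroup G) (A : Finset X) : Finset X :=
  A.filter fun x => ∀ g ∈ H, a g x = x

lemma mem_fixIn {a : G →* Equiv.Perm X} {H : Subgroup G} {A : Finset X} {x : X} :
    x ∈ fixIn a H A ↔ x ∈ A ∧ ∀ g ∈ H, a g x = x := by
  simp [fixIn]

lemma fixIn_bot (a : G →* Equiv.Perm X) (A : Finset X) : fixIn a ⊥ A = A := by
  apply Finset.filter_true_of_mem
  intro x _ g hg
  rw [Subgroup.mem_bot] at hg
  subst hg
  simp

/-- Main lemma: two finite permutation representations of a finite group with the same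
number of fixed points for every subgroup (on invariant sets `A`, `B`) admit an
equivariant bijection `A → B`. -/
lemma main (a : G →* Equiv.Perm X) (b : G →* Equiv.Perm Y) [Nonempty Y] :
    ∀ (n : ℕ) (A : Finset X) (B : Finset Y), A.card = n →
    (∀ g : G, ∀ x ∈ A, a g x ∈ A) → (∀ g : G, ∀ y ∈ B, b g y ∈ B) →
    (∀ H : Subgroup G, (fixIn a H A).card = (fixIn b H B).card) →
    ∃ f : X → Y, Set.BijOn f ↑A ↑B ∧ ∀ g : G, ∀ x ∈ A, f (a g x) = b g (f x) := by
  intro n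
  induction n using Nat.strong_induction_on with
  | _ n IH =>
  intro A B hcard hA hB hfix
  rcases A.eq_empty_or_nonempty with hAe | hAne
  · have hBe : B = ∅ := by
      have := hfix ⊥
      rw [fixIn_bot, fixIn_bot, hAe] at this
      simpa [eq_comm] using Finset.card_eq_zero.1 this.symm
    subst hAe; subst hBe
    exact ⟨fun _ => Classical.arbitrary Y, by simpa using Set.bijOn_empty _, by simp⟩
  -- choose a point with maximal stabilizer
  obtain ⟨x0, hx0A, hx0max⟩ := A.exists_max_image (fun x => Nat.card (stabS a x)) hAne
  set H := stabS a x0 with hHdef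
  have hx0fix : x0 ∈ fixIn a H A := mem_fixIn.2 ⟨hx0A, fun g hg => hg⟩
  obtain ⟨y0, hy0⟩ := Finset.card_pos.1 (by rw [← hfix]; exact Finset.card_pos.2 ⟨x0, hx0fix⟩)
  rw [mem_fixIn] at hy0
  obtain ⟨hy0B, hy0fix⟩ := hy0
  have hHK : H ≤ stabS b y0 := fun g hg => hy0fix g hg
  -- the stabilizer of y0 is exactly H
  have hstab : stabS b y0 = H := by
    have hpos : 0 < (fixIn a (stabS b y0) A).card := by
      rw [hfix]
      exact Finset.card_pos.2 ⟨y0, mem_fixIn.2 ⟨hy0B, fun g hg => hg⟩⟩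
    obtain ⟨x', hx'⟩ := Finset.card_pos.1 hpos
    rw [mem_fixIn] at hx'
    refine (Subgroup.eq_of_le_of_card_ge hHK ?_).symm
    calc Nat.card (stabS b y0) ≤ Nat.card (stabS a x') :=
          Subgroup.card_le_of_le (fun g hg => hx'.2 g hg)
      _ ≤ Nat.card H := hx0max x' hx'.1
  -- the orbit map
  let f0 : X → Y := fun x =>
    if h : ∃ g : G, a g x0 = x then b (Classical.choose h) y0 else Classical.arbitrary Y
  have key : ∀ g g' : G, a g x0 = a g' x0 → b g y0 = b g' y0 := by
    intro g g' h
    have hm : g⁻¹ * g' ∈ H := by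
      rw [hHdef, mem_stabS, map_mul, Equiv.Perm.mul_apply, ← h, ← Equiv.Perm.mul_apply,
        ← map_mul, inv_mul_cancel, map_one, Equiv.Perm.one_apply]
    have hy : b (g⁻¹ * g') y0 = y0 := hHK hm
    have e1 : g * (g⁻¹ * g') = g' := by group
    rw [← e1, map_mul, Equiv.Perm.mul_apply, hy]
  have key' : ∀ g g' : G, b g y0 = b g' y0 → a g x0 = a g' x0 := by
    intro g g' h
    have hm : g⁻¹ * g' ∈ H := by
      rw [← hstab, mem_stabS, map_mul, Equiv.Perm.mul_apply, ← h, ← Equiv.Perm.mul_apply,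
        ← map_mul, inv_mul_cancel, map_one, Equiv.Perm.one_apply]
    have hx : a (g⁻¹ * g') x0 = x0 := hm
    have e1 : g * (g⁻¹ * g') = g' := by group
    rw [← e1, map_mul, Equiv.Perm.mul_apply, hx]
  have hf0 : ∀ g : G, f0 (a g x0) = b g y0 := by
    intro g
    have h : ∃ g' : G, a g' x0 = a g x0 := ⟨g, rfl⟩
    have hspec := Classical.choose_spec h
    simp only [f0, dif_pos h]
    exact key _ _ hspec
  -- orbits
  let OA : Finset X := Finset.univ.image fun g : G => a g x0
  let OB : Finset Y := Finset.univ.image fun g : G => b g y0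
  have memOA : ∀ {x : X}, x ∈ OA ↔ ∃ g : G, a g x0 = x := by
    intro x; simp [OA]
  have memOB : ∀ {y : Y}, y ∈ OB ↔ ∃ g : G, b g y0 = y := by
    intro y; simp [OB]
  have hOAsub : OA ⊆ A := by
    intro x hx
    obtain ⟨g, rfl⟩ := memOA.1 hx
    exact hA g x0 hx0A
  have hOBsub : OB ⊆ B := by
    intro y hy
    obtain ⟨g, rfl⟩ := memOB.1 hy
    exact hB g y0 hy0B
  have hOAinv : ∀ g : G, ∀ x ∈ OA, a g x ∈ OA := by
    intro g x hx
    obtain ⟨g', rfl⟩ := memOA.1 hx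
    exact memOA.2 ⟨g * g', by rw [map_mul, Equiv.Perm.mul_apply]⟩
  have hOBinv : ∀ g : G, ∀ y ∈ OB, b g y ∈ OB := by
    intro g y hy
    obtain ⟨g', rfl⟩ := memOB.1 hy
    exact memOB.2 ⟨g * g', by rw [map_mul, Equiv.Perm.mul_apply]⟩
  have hx0OA : x0 ∈ OA := memOA.2 ⟨1, by simp⟩
  -- properties of f0 on OA
  have hf0maps : ∀ x ∈ OA, f0 x ∈ OB := by
    intro x hx
    obtain ⟨g, rfl⟩ := memOA.1 hx
    rw [hf0]
    exact memOB.2 ⟨g, rfl⟩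
  have hf0inj : ∀ x ∈ OA, ∀ x' ∈ OA, f0 x = f0 x' → x = x' := by
    intro x hx x' hx' h
    obtain ⟨g, rfl⟩ := memOA.1 hx
    obtain ⟨g', rfl⟩ := memOA.1 hx'
    rw [hf0, hf0] at h
    exact key' _ _ h
  have hf0surj : ∀ y ∈ OB, ∃ x ∈ OA, f0 x = y := by
    intro y hy
    obtain ⟨g, rfl⟩ := memOB.1 hy
    exact ⟨a g x0, memOA.2 ⟨g, rfl⟩, hf0 g⟩
  have hf0equiv : ∀ g : G, ∀ x ∈ OA, f0 (a g x) = b g (f0 x) := by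
    intro g x hx
    obtain ⟨g', rfl⟩ := memOA.1 hx
    rw [← Equiv.Perm.mul_apply, ← map_mul, hf0, hf0, map_mul, Equiv.Perm.mul_apply]
  -- fixed-point counts agree on the orbits
  have horbfix : ∀ K : Subgroup G, (fixIn a K OA).card = (fixIn b K OB).card := by
    intro K
    apply Finset.card_bij (fun x _ => f0 x)
    · intro x hx
      rw [mem_fixIn] at hx ⊢
      refine ⟨hf0maps x hx.1, fun g hg => ?_⟩
      rw [← hf0equiv g x hx.1, hx.2 g hg]
    · intro x hx x' hx' h
      rw [mem_fixIn] at hx hx'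
      exact hf0inj x hx.1 x' hx'.1 h
    · intro y hy
      rw [mem_fixIn] at hy
      obtain ⟨x, hxOA, rfl⟩ := hf0surj y hy.1
      refine ⟨x, mem_fixIn.2 ⟨hxOA, fun g hg => ?_⟩, rfl⟩
      apply hf0inj _ (hOAinv g x hxOA) _ hxOA
      rw [hf0equiv g x hxOA, hy.2 g hg]
  -- the complements
  set A' : Finset X := A \ OA with hA'def
  set B' : Finset Y := B \ OB with hB'def
  have hA'inv : ∀ g : G, ∀ x ∈ A', a g x ∈ A' := by
    intro g x hx
    rw [hA'def, Finset.mem_sdiff] at hx ⊢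
    refine ⟨hA g x hx.1, fun hmem => hx.2 ?_⟩
    have := hOAinv g⁻¹ _ hmem
    rwa [← Equiv.Perm.mul_apply, ← map_mul, inv_mul_cancel, map_one,
      Equiv.Perm.one_apply] at this
  have hB'inv : ∀ g : G, ∀ y ∈ B', b g y ∈ B' := by
    intro g y hy
    rw [hB'def, Finset.mem_sdiff] at hy ⊢
    refine ⟨hB g y hy.1, fun hmem => hy.2 ?_⟩
    have := hOBinv g⁻¹ _ hmem
    rwa [← Equiv.Perm.mul_apply, ← map_mul, inv_mul_cancel, map_one,
      Equiv.Perm.one_apply] at this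
  have hfix' : ∀ K : Subgroup G, (fixIn a K A').card = (fixIn b K B').card := by
    intro K
    have e1 : fixIn a K A' = fixIn a K A \ fixIn a K OA := by
      ext x
      simp only [mem_fixIn, hA'def, Finset.mem_sdiff]
      tauto
    have e2 : fixIn b K B' = fixIn b K B \ fixIn b K OB := by
      ext y
      simp only [mem_fixIn, hB'def, Finset.mem_sdiff]
      tauto
    have s1 : fixIn a K OA ⊆ fixIn a K A := by
      intro x hx
      rw [mem_fixIn] at hx ⊢
      exact ⟨hOAsub hx.1, hx.2⟩
    have s2 : fixIn b K OB ⊆ fixIn b K B := by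
      intro y hy
      rw [mem_fixIn] at hy ⊢
      exact ⟨hOBsub hy.1, hy.2⟩
    rw [e1, e2, Finset.card_sdiff_of_subset s1, Finset.card_sdiff_of_subset s2, hfix K, horbfix K]
  have hlt : A'.card < n := by
    rw [hA'def, Finset.card_sdiff_of_subset hOAsub, ← hcard]
    have h1 : 0 < OA.card := Finset.card_pos.2 ⟨x0, hx0OA⟩
    have h2 : 0 < A.card := Finset.card_pos.2 hAne
    omega
  obtain ⟨f', hf'bij, hf'equiv⟩ := IH A'.card hlt A' B' rfl hA'inv hB'inv hfix'
  -- glue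
  refine ⟨fun x => if x ∈ OA then f0 x else f' x, ⟨?_, ?_, ?_⟩, ?_⟩
  · -- MapsTo
    intro x hx
    rw [Finset.mem_coe] at hx
    by_cases h : x ∈ OA
    · simp only [h, if_pos]
      exact Finset.mem_coe.2 (hOBsub (hf0maps x h))
    · simp only [h, if_neg, if_false]
      have hx' : x ∈ A' := Finset.mem_sdiff.2 ⟨hx, h⟩
      have := hf'bij.mapsTo (Finset.mem_coe.2 hx')
      rw [Finset.mem_coe, hB'def, Finset.mem_sdiff] at this
      exact Finset.mem_coe.2 this.1
  · -- InjOn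
    intro x hx x' hx' h
    rw [Finset.mem_coe] at hx hx'
    by_cases h1 : x ∈ OA <;> by_cases h2 : x' ∈ OA <;>
      simp only [h1, h2, if_pos, if_neg, if_true, if_false] at h
    · exact hf0inj x h1 x' h2 h
    · exfalso
      have hy1 : f0 x ∈ OB := hf0maps x h1
      have hx'2 : x' ∈ A' := Finset.mem_sdiff.2 ⟨hx', h2⟩
      have := hf'bij.mapsTo (Finset.mem_coe.2 hx'2)
      rw [Finset.mem_coe, hB'def, Finset.mem_sdiff] at this
      rw [h] at hy1
      exact this.2 hy1
    · exfalso
      have hy1 : f0 x' ∈ OB := hf0maps x' h2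
      have hx2 : x ∈ A' := Finset.mem_sdiff.2 ⟨hx, h1⟩
      have := hf'bij.mapsTo (Finset.mem_coe.2 hx2)
      rw [Finset.mem_coe, hB'def, Finset.mem_sdiff] at this
      rw [← h] at hy1
      exact this.2 hy1
    · have hx2 : x ∈ A' := Finset.mem_sdiff.2 ⟨hx, h1⟩
      have hx'2 : x' ∈ A' := Finset.mem_sdiff.2 ⟨hx', h2⟩
      exact hf'bij.injOn (Finset.mem_coe.2 hx2) (Finset.mem_coe.2 hx'2) h
  · -- SurjOn
    intro y hy
    rw [Finset.mem_coe] at hy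
    by_cases h : y ∈ OB
    · obtain ⟨x, hxOA, rfl⟩ := hf0surj y h
      exact ⟨x, Finset.mem_coe.2 (hOAsub hxOA), by simp only [hxOA, if_pos]⟩
    · have hy' : y ∈ B' := Finset.mem_sdiff.2 ⟨hy, h⟩
      obtain ⟨x, hx, rfl⟩ := hf'bij.surjOn (Finset.mem_coe.2 hy')
      rw [Finset.mem_coe, hA'def, Finset.mem_sdiff] at hx
      exact ⟨x, Finset.mem_coe.2 hx.1, by simp only [hx.2, if_neg, if_false]⟩
  · -- equivariance
    intro g x hx
    by_cases h : x ∈ OA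
    · have h2 : a g x ∈ OA := hOAinv g x h
      simp only [h, h2, if_pos]
      exact hf0equiv g x h
    · have hx' : x ∈ A' := Finset.mem_sdiff.2 ⟨hx, h⟩
      have h2 : a g x ∈ A' := hA'inv g x hx'
      have h3 : a g x ∉ OA := (Finset.mem_sdiff.1 h2).2
      simp only [h, h3, if_neg, if_false]
      exact hf'equiv g x hx'



/-- An intertwining bijection preserves fixed-point counts. -/
lemma card_fix_univ_eq (a : G →* Equiv.Perm X) (b : G →* Equiv.Perm Y) (e : X ≃ Y)
    (he : ∀ (g : G) (x : X), e (a g x) = b g (e x)) (H : Subgroup G) :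
    (fixIn a H Finset.univ).card = (fixIn b H Finset.univ).card := by
  apply Finset.card_bij (fun x _ => e x)
  · intro x hx
    rw [mem_fixIn] at hx ⊢
    refine ⟨Finset.mem_univ _, fun g hg => ?_⟩
    rw [← he g x, hx.2 g hg]
  · intro x _ x' _ h
    exact e.injective h
  · intro y hy
    rw [mem_fixIn] at hy
    refine ⟨e.symm y, mem_fixIn.2 ⟨Finset.mem_univ _, fun g hg => ?_⟩, e.apply_symm_apply y⟩
    apply e.injective
    rw [he g, e.apply_symm_apply, hy.2 g hg]

end Stmt9Aux

/-- The diagonal embedding `Σ_d → Σ_n` for `n = m·d`: we identify `{1,…,n}` with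
`m` disjoint blocks of size `d`, i.e. with `Fin m × Fin d`, and let a permutation
of `Fin d` act identically on each block. -/
def diagEmb (m d : ℕ) : Equiv.Perm (Fin d) →* Equiv.Perm (Fin m × Fin d) where
  toFun π := Equiv.prodCongr (Equiv.refl (Fin m)) π
  map_one' := by
    ext x
    · simp
    · simp
  map_mul' a b := by
    ext x
    · simp
    · simp

lemma diagEmb_apply (m d : ℕ) (π : Equiv.Perm (Fin d)) (p : Fin m × Fin d) :
    diagEmb m d π p = (p.1, π p.2) := rfl

lemma card_fix_prod {G : Type*} [Group G] [Fintype G] (m d : ℕ)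
    (c : G →* Equiv.Perm (Fin d)) (H : Subgroup G) :
    (Stmt9Aux.fixIn ((diagEmb m d).comp c) H (Finset.univ : Finset (Fin m × Fin d))).card
      = m * (Stmt9Aux.fixIn c H Finset.univ).card := by
  have : Stmt9Aux.fixIn ((diagEmb m d).comp c) H Finset.univ
      = (Finset.univ : Finset (Fin m)) ×ˢ Stmt9Aux.fixIn c H Finset.univ := by
    ext ⟨i, x⟩
    simp only [Stmt9Aux.mem_fixIn, Finset.mem_univ, true_and, Finset.mem_product,
      MonoidHom.comp_apply, diagEmb_apply, Prod.mk.injEq]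
  rw [this, Finset.card_product, Finset.card_univ, Fintype.card_fin]

/-- let `d ∣ n` (here `n = m·d`), let `Σ_d` be embedded diagonally in
`Σ_n`, and let `G ⊆ Σ_d` be a subgroup.  If `σ ∈ Σ_n` conjugates (the image of)
`G` into (the image of) `Σ_d`, then there exists `η ∈ Σ_d` such that conjugation
by `η` agrees with conjugation by `σ` on `G`. -/
theorem stmt9 (m d : ℕ) (G : Subgroup (Equiv.Perm (Fin d)))
    (σ : Equiv.Perm (Fin m × Fin d))
    (hσ : ∀ g ∈ G, ∃ h : Equiv.Perm (Fin d), σ⁻¹ * diagEmb m d g * σ = diagEmb m d h) :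
    ∃ η : Equiv.Perm (Fin d), ∀ g ∈ G,
      σ⁻¹ * diagEmb m d g * σ = diagEmb m d (η⁻¹ * g * η) := by
  by_cases hmd : m = 0 ∨ d = 0
  · refine ⟨1, fun g hg => ?_⟩
    apply Equiv.ext
    intro p
    rcases hmd with h | h
    · subst h; exact p.1.elim0
    · subst h; exact p.2.elim0
  push_neg at hmd
  have hm : 0 < m := Nat.pos_of_ne_zero hmd.1
  have hd : 0 < d := Nat.pos_of_ne_zero hmd.2
  haveI : Nonempty (Fin d) := ⟨⟨0, hd⟩⟩
  haveI : Fintype ↥G := Fintype.ofFinite _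
  -- injectivity of the diagonal embedding
  have diagInj : Function.Injective (diagEmb m d) := by
    intro π π' h
    apply Equiv.ext
    intro x
    have := congrArg (fun e : Equiv.Perm (Fin m × Fin d) => (e (⟨0, hm⟩, x)).2) h
    simpa [diagEmb_apply] using this
  -- the conjugated representation
  have bmul : ∀ g h : ↥G,
      (fun g : ↥G => Classical.choose (hσ g g.2)) (g * h)
        = (fun g : ↥G => Classical.choose (hσ g g.2)) g
          * (fun g : ↥G => Classical.choose (hσ g g.2)) h := by
    intro g h
    apply diagInj
    rw [map_mul, ← Classical.choose_spec (hσ _ (g * h).2),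
      ← Classical.choose_spec (hσ _ g.2), ← Classical.choose_spec (hσ _ h.2),
      Subgroup.coe_mul, map_mul]
    group
  let bH : ↥G →* Equiv.Perm (Fin d) :=
    MonoidHom.mk' (fun g : ↥G => Classical.choose (hσ g g.2)) bmul
  have bHspec : ∀ g : ↥G, σ⁻¹ * diagEmb m d ↑g * σ = diagEmb m d (bH g) :=
    fun g => Classical.choose_spec (hσ g g.2)
  -- σ intertwines the two diagonal representations
  have he : ∀ (g : ↥G) (p : Fin m × Fin d),
      σ (((diagEmb m d).comp bH) g p) = ((diagEmb m d).comp G.subtype) g (σ p) := by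
    intro g p
    have h2 : diagEmb m d ↑g * σ = σ * diagEmb m d (bH g) := by
      rw [← bHspec g]; group
    calc σ ((diagEmb m d (bH g)) p) = (σ * diagEmb m d (bH g)) p := rfl
      _ = (diagEmb m d ↑g * σ) p := by rw [h2]
      _ = diagEmb m d ↑g (σ p) := rfl
  -- equal fixed-point counts
  have hfix : ∀ H : Subgroup ↥G,
      (Stmt9Aux.fixIn bH H Finset.univ).card = (Stmt9Aux.fixIn G.subtype H Finset.univ).card := by
    intro H
    have h1 := Stmt9Aux.card_fix_univ_eq ((diagEmb m d).comp bH) ((diagEmb m d).comp G.subtype) σ he H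
    rw [card_fix_prod, card_fix_prod] at h1
    exact Nat.eq_of_mul_eq_mul_left hm h1
  obtain ⟨f, hbij, hequiv⟩ := Stmt9Aux.main bH G.subtype Finset.univ.card Finset.univ Finset.univ rfl
    (fun _ _ _ => Finset.mem_univ _) (fun _ _ _ => Finset.mem_univ _) hfix
  have hfbij : Function.Bijective f := by
    rw [← Set.bijOn_univ]
    simpa using hbij
  refine ⟨Equiv.ofBijective f hfbij, fun g hg => ?_⟩
  rw [bHspec ⟨g, hg⟩]
  congr 1
  apply Equiv.ext
  intro x
  set η := Equiv.ofBijective f hfbij with hη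
  have hx : η (bH ⟨g, hg⟩ x) = g (η x) := hequiv ⟨g, hg⟩ x (Finset.mem_univ x)
  calc bH ⟨g, hg⟩ x = η⁻¹ (η (bH ⟨g, hg⟩ x)) := (Equiv.symm_apply_apply η _).symm
    _ = η⁻¹ (g (η x)) := by rw [hx]
    _ = (η⁻¹ * g * η) x := by simp [Equiv.Perm.mul_apply]
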